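/- Let f : ℝ^n → ℝ_{>0} be a convex twice continuously differentiable function that is γ-second order robust and μ-multiplicatively smooth with respect to the ℓ₂ norm. Let x, x* ∈ ℝ^n with ‖x - x*‖₂ ≤ R and f(x) > f(x*). Then the gradient step x' = x - η∇f(x) with η = min{1/(2μf(x)), 1/(γ‖∇f(x)‖₂)} satisfies f(x) - f(x') ≥ min{ (f(x)-f(x*))²/(4μ f(x) R²), (f(x)-f(x*))/(2γR) }. -/

import Mathlib

open Real

set_option maxHeartbeats 1000000 in
/-- Gradient update progress for a positive, convex, C² function that is
γ-second order robust and μ-multiplicatively smooth with respect to the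
ℓ₂ norm. -/
theorem gradient_update_progress
    {n : ℕ} (f : EuclideanSpace ℝ (Fin n) → ℝ) (γ μ : ℝ) (hγ : 0 < γ) (hμ : 0 < μ)
    (hf : ContDiff ℝ 2 f) (hpos : ∀ y, 0 < f y) (hconv : ConvexOn ℝ Set.univ f)
    (Q : EuclideanSpace ℝ (Fin n) → EuclideanSpace ℝ (Fin n) → ℝ)
    (hQ : ∀ z y, Q z y = fderiv ℝ (fun u => fderiv ℝ f u y) z y)
    -- γ-second order robustness w.r.t. ℓ₂
    (hrob : ∀ a b y, ‖b - a‖ ≤ 1 / γ →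
      (1 / 2) * Q a y ≤ Q b y ∧ Q b y ≤ 2 * Q a y)
    -- μ-multiplicative smoothness w.r.t. ℓ₂
    (hms : ∀ z y, Q z y ≤ μ * f z * ‖y‖ ^ 2)
    (x xs gradfx : EuclideanSpace ℝ (Fin n)) (hgrad : HasGradientAt f gradfx x)
    (R : ℝ) (hR : 0 < R) (hdist : ‖x - xs‖ ≤ R) (hfx : f x > f xs)
    (η : ℝ) (hη : η = min (1 / (2 * μ * f x)) (1 / (γ * ‖gradfx‖)))
    (x' : EuclideanSpace ℝ (Fin n)) (hx' : x' = x - η • gradfx) :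
    f x - f x' ≥
      min ((f x - f xs) ^ 2 / (4 * μ * f x * R ^ 2)) ((f x - f xs) / (2 * γ * R)) := by
  have hfd : Differentiable ℝ f := hf.differentiable (by norm_num)
  have hfxpos : 0 < f x := hpos x
  have hfderiv : ∀ z y : EuclideanSpace ℝ (Fin n), ∀ t : ℝ,
      HasDerivAt (fun t : ℝ => f (z + t • y)) (fderiv ℝ f (z + t • y) y) t := by
    intro z y t
    have hL : HasDerivAt (fun t : ℝ => z + t • y) y t := by
      simpa using ((hasDerivAt_id t).smul_const y).const_add z
    exact ((hfd (z + t • y)).hasFDerivAt).comp_hasDerivAt t hL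
  have hfx_inner : ∀ y : EuclideanSpace ℝ (Fin n), fderiv ℝ f x y = inner ℝ gradfx y := by
    intro y
    rw [hgrad.hasFDerivAt.fderiv]
    simp [InnerProductSpace.toDual_apply_apply]
  -- Step A : f x - f xs ≤ ‖gradfx‖ * R
  have keyA : f x - f xs ≤ ‖gradfx‖ * R := by
    set w : EuclideanSpace ℝ (Fin n) := xs - x with hw
    have hψ0 : HasDerivAt (fun t : ℝ => f (x + t • w)) (fderiv ℝ f x w) 0 := by
      simpa using hfderiv x w 0
    have hslope : fderiv ℝ f x w ≤ f xs - f x := by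
      have htend : Filter.Tendsto (slope (fun t : ℝ => f (x + t • w)) 0)
          (nhdsWithin 0 (Set.Ioi 0)) (nhds (fderiv ℝ f x w)) := by
        have := hasDerivAt_iff_tendsto_slope.mp hψ0
        exact this.mono_left (nhdsWithin_mono _ (fun t ht => ne_of_gt ht))
      refine le_of_tendsto htend ?_
      filter_upwards [Ioc_mem_nhdsGT_of_mem (by norm_num : (0:ℝ) ∈ Set.Ico (0:ℝ) 1)]
        with t ht
      have ht0 : 0 < t := ht.1
      have ht1 : t ≤ 1 := ht.2
      have hpteq : (1 - t) • x + t • xs = x + t • w := by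
        rw [hw]; module
      have hcv := hconv.2 (Set.mem_univ x) (Set.mem_univ xs)
        (by linarith : (0:ℝ) ≤ 1 - t) ht0.le (by ring)
      rw [hpteq] at hcv
      simp only [smul_eq_mul] at hcv
      have hslope_eq : slope (fun t : ℝ => f (x + t • w)) 0 t
          = (f (x + t • w) - f x) / t := by
        rw [slope_def_field]
        norm_num
      rw [hslope_eq, div_le_iff₀ ht0]
      nlinarith [hcv]
    have hinner : (f x - f xs) ≤ inner ℝ gradfx (x - xs) := by
      have h1 : fderiv ℝ f x w = inner ℝ gradfx w := hfx_inner w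
      have h2 : (inner ℝ gradfx (x - xs) : ℝ) = - inner ℝ gradfx w := by
        rw [hw, ← inner_neg_right]; norm_num
      rw [h2]; rw [h1] at hslope; linarith
    calc f x - f xs ≤ inner ℝ gradfx (x - xs) := hinner
      _ ≤ ‖gradfx‖ * ‖x - xs‖ := real_inner_le_norm _ _
      _ ≤ ‖gradfx‖ * R := mul_le_mul_of_nonneg_left hdist (norm_nonneg _)
  have hΔ : 0 < f x - f xs := by linarith
  have hgpos : 0 < ‖gradfx‖ := by nlinarith
  -- η facts
  have hη1 : η ≤ 1 / (2 * μ * f x) := hη ▸ min_le_left _ _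
  have hη2 : η ≤ 1 / (γ * ‖gradfx‖) := hη ▸ min_le_right _ _
  have hηpos : 0 < η := by
    rw [hη]; apply lt_min <;> positivity
  have hηg : η * ‖gradfx‖ ≤ 1 / γ := by
    have h := mul_le_mul_of_nonneg_right hη2 (norm_nonneg gradfx)
    have heq : 1 / (γ * ‖gradfx‖) * ‖gradfx‖ = 1 / γ := by
      field_simp
    rw [heq] at h
    exact h
  -- the direction
  set v : EuclideanSpace ℝ (Fin n) := (-η) • gradfx with hv
  have hvnorm : ‖v‖ = η * ‖gradfx‖ := by
    rw [hv, norm_smul]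
    simp [abs_of_nonneg hηpos.le]
  -- second derivative along segment
  set D : ℝ → ℝ := fun t => fderiv ℝ f (x + t • v) v with hD
  have hDderiv : ∀ t : ℝ, HasDerivAt D (Q (x + t • v) v) t := by
    intro t
    have hH : ContDiff ℝ 1 (fun u => fderiv ℝ f u v) :=
      (hf.fderiv_right (by norm_num)).clm_apply contDiff_const
    have hL : HasDerivAt (fun t : ℝ => x + t • v) v t := by
      simpa using ((hasDerivAt_id t).smul_const v).const_add x
    have h := ((hH.differentiable one_ne_zero) (x + t • v)).hasFDerivAt.comp_hasDerivAt t hL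
    rw [hQ]
    exact h
  -- bound on Q along segment
  set Mv : ℝ := μ * f x * ‖v‖ ^ 2 with hMv
  have hQseg : ∀ s : ℝ, s ∈ Set.Icc (0:ℝ) 1 → Q (x + s • v) v ≤ 2 * Mv := by
    intro s hs
    have hnorm : ‖(x + s • v) - x‖ ≤ 1 / γ := by
      have hseq : ‖(x + s • v) - x‖ = s * ‖v‖ := by
        simp [norm_smul, abs_of_nonneg hs.1]
      rw [hseq, hvnorm]
      calc s * (η * ‖gradfx‖) ≤ 1 * (η * ‖gradfx‖) :=
            mul_le_mul_of_nonneg_right hs.2 (by positivity)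
        _ = η * ‖gradfx‖ := by ring
        _ ≤ 1 / γ := hηg
    have h1 := (hrob x (x + s • v) v hnorm).2
    have h2 := hms x v
    calc Q (x + s • v) v ≤ 2 * Q x v := h1
      _ ≤ 2 * Mv := by rw [hMv]; linarith
  -- auxiliary function ψ
  set ψ : ℝ → ℝ := fun t => f (x + t • v) - (f x + t * D 0 + t ^ 2 * Mv) with hψdef
  have hψderiv : ∀ t : ℝ, HasDerivAt ψ (D t - D 0 - 2 * t * Mv) t := by
    intro t
    have h2 : HasDerivAt (fun u : ℝ => f x + u * D 0 + u ^ 2 * Mv)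
        (D 0 + 2 * t * Mv) t := by
      have h := (((hasDerivAt_id t).mul_const (D 0)).const_add (f x)).add
        ((hasDerivAt_pow 2 t).mul_const Mv)
      refine h.congr_deriv ?_
      push_cast; ring
    have h3 := (hfderiv x v t).sub h2
    have h4 : HasDerivAt (fun u : ℝ => f (x + u • v) - (f x + u * D 0 + u ^ 2 * Mv))
        (D t - D 0 - 2 * t * Mv) t := by
      refine h3.congr_deriv ?_
      rw [hD]; ring
    rw [hψdef]
    exact h4
  -- MVT twice
  have hψcont : ContinuousOn ψ (Set.Icc 0 1) :=
    fun t _ => ((hψderiv t).continuousAt).continuousWithinAt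
  obtain ⟨c, hc, hceq⟩ := exists_hasDerivAt_eq_slope ψ _ (zero_lt_one) hψcont
    (fun t _ => hψderiv t)
  have hDcont : ContinuousOn D (Set.Icc 0 c) :=
    fun t _ => ((hDderiv t).continuousAt).continuousWithinAt
  obtain ⟨d, hd, hdeq⟩ := exists_hasDerivAt_eq_slope D _ hc.1 hDcont
    (fun t _ => hDderiv t)
  have hψ0 : ψ 0 = 0 := by simp [hψdef]
  have hψ1 : ψ 1 ≤ 0 := by
    have hc1 : ψ 1 = D c - D 0 - 2 * c * Mv := by
      rw [hceq, hψ0]; norm_num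
    have hQd : Q (x + d • v) v ≤ 2 * Mv :=
      hQseg d ⟨hd.1.le, hd.2.le.trans hc.2.le⟩
    have hc0 : c ≠ 0 := ne_of_gt hc.1
    have hDc : D c - D 0 = c * Q (x + d • v) v := by
      rw [hdeq]
      field_simp
      ring
    have hDcle : D c - D 0 ≤ c * (2 * Mv) := by
      rw [hDc]
      exact mul_le_mul_of_nonneg_left hQd hc.1.le
    rw [hc1]
    nlinarith [hc.1]
  -- descent inequality
  have hx'eq : f x' = f (x + (1:ℝ) • v) := by
    rw [hx', hv]; congr 1; module
  have hψ1' : f (x + (1:ℝ) • v) - (f x + 1 * D 0 + 1 ^ 2 * Mv) ≤ 0 := by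
    rw [hψdef] at hψ1
    exact hψ1
  have hdescent : f x' ≤ f x + D 0 + Mv := by
    rw [hx'eq]
    nlinarith [hψ1']
  have hD0 : D 0 = -η * ‖gradfx‖ ^ 2 := by
    have h0 : D 0 = fderiv ℝ f x v := by
      rw [hD]
      norm_num
    rw [h0, hfx_inner v, hv, real_inner_smul_right, real_inner_self_eq_norm_sq]
  have hMvval : Mv = μ * f x * η ^ 2 * ‖gradfx‖ ^ 2 := by
    rw [hMv, hvnorm]; ring
  -- final arithmetic
  have hmain : f x - f x' ≥ η * ‖gradfx‖ ^ 2 / 2 := by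
    have h1 : f x - f x' ≥ η * ‖gradfx‖ ^ 2 - μ * f x * η ^ 2 * ‖gradfx‖ ^ 2 := by
      rw [hD0, hMvval] at hdescent
      nlinarith [hdescent]
    have h2 : μ * f x * η ≤ 1 / 2 := by
      rw [le_div_iff₀ (by positivity : (0:ℝ) < 2 * μ * f x)] at hη1
      nlinarith
    nlinarith [mul_nonneg (mul_nonneg hηpos.le (sq_nonneg ‖gradfx‖))
      (by linarith : (0:ℝ) ≤ 1 / 2 - μ * f x * η)]
  refine le_trans ?_ hmain
  rcases le_total (1 / (2 * μ * f x)) (1 / (γ * ‖gradfx‖)) with h | h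
  have hsq : (f x - f xs) ^ 2 ≤ ‖gradfx‖ ^ 2 * R ^ 2 := by
    nlinarith [keyA, hΔ, hgpos, hR]
  · have hηeq : η = 1 / (2 * μ * f x) := by rw [hη, min_eq_left h]
    have e1 : η * ‖gradfx‖ ^ 2 / 2 = ‖gradfx‖ ^ 2 / (4 * μ * f x) := by
      rw [hηeq]; field_simp; ring
    apply (min_le_left _ _).trans
    rw [e1, div_le_div_iff₀ (by positivity) (by positivity)]
    nlinarith [hsq, mul_pos hμ hfxpos]
  · have hηeq : η = 1 / (γ * ‖gradfx‖) := by rw [hη, min_eq_right h]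
    have e2 : η * ‖gradfx‖ ^ 2 / 2 = ‖gradfx‖ / (2 * γ) := by
      rw [hηeq]; field_simp
    apply (min_le_right _ _).trans
    rw [e2, div_le_div_iff₀ (by positivity) (by positivity)]
    nlinarith [keyA, hγ, hR]
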